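/- Let (ξ₁, ξ₂) be a pair of nonnegative real random variables belonging to the class 𝒦. Then for all v ≥ 0 and w ≥ 0, P(ξ₁ > v and ξ₂ > w) = P(ξ₁ > v + w); in particular, the joint survival probability P(ξ₁ > v, ξ₂ > w) depends on (v, w) only through the sum v + w. -/
import Mathlib


open MeasureTheory ProbabilityTheory

/-- If `(ξ₁, ξ₂)` belongs to the class `𝒦`, then for all
`v ≥ 0` and `w ≥ 0`, `P(ξ₁ > v, ξ₂ > w) = P(ξ₁ > v + w)`; in particular the
joint survival probability depends only on the sum `v + w`. -/
theorem stmt4 {Ω Ω' : Type*} [MeasurableSpace Ω] [MeasurableSpace Ω']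
    (P : Measure Ω) [IsProbabilityMeasure P]
    (P' : Measure Ω') [IsProbabilityMeasure P']
    (ξ₁ ξ₂ : Ω → ℝ) (hξ₁m : Measurable ξ₁) (hξ₂m : Measurable ξ₂)
    (hξ₁0 : ∀ ω, 0 ≤ ξ₁ ω) (hξ₂0 : ∀ ω, 0 ≤ ξ₂ ω)
    (V s : Ω' → ℝ) (hVm : Measurable V) (hsm : Measurable s)
    (hV0 : ∀ ω, 0 ≤ V ω)
    (hsUnif : P'.map s = volume.restrict (Set.Ioo (0:ℝ) 1))
    (hIndep : IndepFun V s P')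
    (hlaw : P.map (fun ω => (ξ₁ ω, ξ₂ ω)) =
      P'.map (fun ω => (s ω * V ω, (1 - s ω) * V ω))) :
    ∀ v w : ℝ, 0 ≤ v → 0 ≤ w →
      P {ω | v < ξ₁ ω ∧ w < ξ₂ ω} = P {ω | v + w < ξ₁ ω} := by
  intro v w hv hw
  have hpm : Measurable (fun ω => (ξ₁ ω, ξ₂ ω)) := hξ₁m.prodMk hξ₂m
  have hgm : Measurable (fun ω : Ω' => (s ω * V ω, (1 - s ω) * V ω)) :=
    ((hsm.mul hVm).prodMk (((measurable_const.sub hsm).mul hVm)))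
  have hS1 : MeasurableSet {p : ℝ × ℝ | v < p.1 ∧ w < p.2} :=
    (measurableSet_lt measurable_const measurable_fst).inter
      (measurableSet_lt measurable_const measurable_snd)
  have hS2 : MeasurableSet {p : ℝ × ℝ | v + w < p.1} :=
    measurableSet_lt measurable_const measurable_fst
  have e1 : P {ω | v < ξ₁ ω ∧ w < ξ₂ ω}
      = P' {ω | v < s ω * V ω ∧ w < (1 - s ω) * V ω} := by
    have := congrArg (fun μ : Measure (ℝ × ℝ) => μ {p : ℝ × ℝ | v < p.1 ∧ w < p.2}) hlaw
    simpa [Measure.map_apply hpm hS1, Measure.map_apply hgm hS1, Set.preimage_setOf_eq]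
      using this
  have e2 : P {ω | v + w < ξ₁ ω}
      = P' {ω | v + w < s ω * V ω} := by
    have := congrArg (fun μ : Measure (ℝ × ℝ) => μ {p : ℝ × ℝ | v + w < p.1}) hlaw
    simpa [Measure.map_apply hpm hS2, Measure.map_apply hgm hS2, Set.preimage_setOf_eq]
      using this
  rw [e1, e2]
  -- joint law of (V, s) is product
  have hVs : P'.map (fun ω => (V ω, s ω)) = (P'.map V).prod (P'.map s) :=
    (indepFun_iff_map_prod_eq_prod_map_map hVm.aemeasurable hsm.aemeasurable).mp hIndep
  have hVsm : Measurable (fun ω : Ω' => (V ω, s ω)) := hVm.prodMk hsm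
  have hT1 : MeasurableSet {p : ℝ × ℝ | v < p.2 * p.1 ∧ w < (1 - p.2) * p.1} :=
    (measurableSet_lt measurable_const (measurable_snd.mul measurable_fst)).inter
      (measurableSet_lt measurable_const ((measurable_const.sub measurable_snd).mul measurable_fst))
  have hT2 : MeasurableSet {p : ℝ × ℝ | v + w < p.2 * p.1} :=
    measurableSet_lt measurable_const (measurable_snd.mul measurable_fst)
  have f1 : P' {ω | v < s ω * V ω ∧ w < (1 - s ω) * V ω}
      = ((P'.map V).prod (P'.map s)) {p : ℝ × ℝ | v < p.2 * p.1 ∧ w < (1 - p.2) * p.1} := by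
    rw [← hVs, Measure.map_apply hVsm hT1]
    rfl
  have f2 : P' {ω | v + w < s ω * V ω}
      = ((P'.map V).prod (P'.map s)) {p : ℝ × ℝ | v + w < p.2 * p.1} := by
    rw [← hVs, Measure.map_apply hVsm hT2]
    rfl
  rw [f1, f2, Measure.prod_apply hT1, Measure.prod_apply hT2]
  -- a.e. x ≥ 0 under P'.map V
  have hae : ∀ᵐ x ∂(P'.map V), 0 ≤ x := by
    have hms : MeasurableSet {x : ℝ | 0 ≤ x} := measurableSet_le measurable_const measurable_id
    exact (ae_map_iff hVm.aemeasurable hms).mpr (ae_of_all _ hV0)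
  refine lintegral_congr_ae (hae.mono fun x hx => ?_)
  rw [hsUnif]
  simp only [Set.preimage_setOf_eq]
  rcases eq_or_lt_of_le hx with hx0 | hx0
  · have : {t : ℝ | v < t * x ∧ w < (1 - t) * x} = ∅ := by
      ext t; simp [← hx0]; intro h; linarith
    have h2 : {t : ℝ | v + w < t * x} = ∅ := by
      ext t; simp [← hx0]; linarith
    rw [this, h2]
  · have hA : {t : ℝ | v < t * x ∧ w < (1 - t) * x} = Set.Ioo (v / x) (1 - w / x) := by
      ext t
      simp only [Set.mem_setOf_eq, Set.mem_Ioo, div_lt_iff₀ hx0]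
      rw [lt_sub_comm, div_lt_iff₀ hx0]
    have hB : {t : ℝ | v + w < t * x} = Set.Ioi ((v + w) / x) := by
      ext t
      simp only [Set.mem_setOf_eq, Set.mem_Ioi, div_lt_iff₀ hx0]
    rw [hA, hB, Measure.restrict_apply measurableSet_Ioo, Measure.restrict_apply measurableSet_Ioi]
    have i1 : Set.Ioo (v / x) (1 - w / x) ∩ Set.Ioo (0:ℝ) 1 = Set.Ioo (v / x) (1 - w / x) := by
      rw [Set.inter_eq_left]
      intro t ht
      have h1 : 0 ≤ v / x := div_nonneg hv hx0.le
      have h2 : 0 ≤ w / x := div_nonneg hw hx0.le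
      exact ⟨lt_of_le_of_lt h1 ht.1, lt_of_lt_of_le ht.2 (by linarith)⟩
    have i2 : Set.Ioi ((v + w) / x) ∩ Set.Ioo (0:ℝ) 1 = Set.Ioo ((v + w) / x) 1 := by
      ext t
      have h1 : 0 ≤ (v + w) / x := div_nonneg (by linarith) hx0.le
      simp only [Set.mem_inter_iff, Set.mem_Ioi, Set.mem_Ioo]
      constructor
      · rintro ⟨h, _, h2⟩; exact ⟨h, h2⟩
      · rintro ⟨h, h2⟩; exact ⟨h, lt_of_le_of_lt h1 h, h2⟩
    rw [i1, i2, Real.volume_Ioo, Real.volume_Ioo]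
    congr 1
    rw [add_div]
    ring
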